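/- There is a nonnegative, integrable random variable X_∞, measurable with respect to the σ-algebra generated by ∪_{n ≥ n0} F_n, with E[X_∞] ≤ x0 · Γ(n0)/Γ(n0+a), such that n^{-a} · X_n → X_∞ almost surely as n → ∞. -/

import Mathlib

open MeasureTheory Filter
open Finset Topology Nat
open scoped ENNReal NNReal

lemma stmt5_aux (n0 : ℕ) (hn0 : 1 ≤ n0) (a : ℝ) (ha : -(n0 : ℝ) < a) :
    Tendsto (fun n : ℕ => (n : ℝ) ^ (-a) * ∏ k ∈ Finset.range (n - n0), (1 + a / ((n0 : ℝ) + k)))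
      atTop (𝓝 (Real.Gamma n0 / Real.Gamma ((n0 : ℝ) + a))) := by
  have hn0R : (0:ℝ) < n0 := by exact_mod_cast hn0
  have hpos : ∀ k : ℕ, (0:ℝ) < (n0 : ℝ) + k := fun k => by positivity
  have hposa : ∀ k : ℕ, (0:ℝ) < (n0 : ℝ) + a + k := fun k => by
    have hk : (0:ℝ) ≤ (k : ℝ) := Nat.cast_nonneg k
    linarith
  have hGpos : 0 < Real.Gamma ((n0 : ℝ) + a) := Real.Gamma_pos_of_pos (by linarith)
  -- the product rewritten as quotient of products
  have hprod : ∀ n : ℕ, (∏ k ∈ Finset.range n, (1 + a / ((n0 : ℝ) + k)))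
      = (∏ k ∈ Finset.range n, ((n0 : ℝ) + a + k)) / ∏ k ∈ Finset.range n, ((n0 : ℝ) + k) := by
    intro n
    rw [← Finset.prod_div_distrib]
    refine Finset.prod_congr rfl fun k _ => ?_
    have := (hpos k).ne'
    field_simp
    ring
  -- key limit along n ↦ range (n+1)
  have key : Tendsto (fun n : ℕ => (n : ℝ) ^ (-a) * ∏ k ∈ Finset.range (n + 1),
      (1 + a / ((n0 : ℝ) + k))) atTop (𝓝 (Real.Gamma n0 / Real.Gamma ((n0 : ℝ) + a))) := by
    have h1 : Tendsto (fun n : ℕ => Real.GammaSeq (n0 : ℝ) n / Real.GammaSeq ((n0 : ℝ) + a) n)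
        atTop (𝓝 (Real.Gamma n0 / Real.Gamma ((n0 : ℝ) + a))) :=
      (Real.GammaSeq_tendsto_Gamma (n0 : ℝ)).div (Real.GammaSeq_tendsto_Gamma ((n0 : ℝ) + a))
        hGpos.ne'
    refine h1.congr' ?_
    filter_upwards [eventually_ge_atTop 1] with n hn
    have hnR : (0:ℝ) < n := by exact_mod_cast hn
    have hP1 : (0:ℝ) < ∏ k ∈ Finset.range (n + 1), ((n0 : ℝ) + k) :=
      Finset.prod_pos fun k _ => hpos k
    have hP2 : (0:ℝ) < ∏ k ∈ Finset.range (n + 1), ((n0 : ℝ) + a + k) :=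
      Finset.prod_pos fun k _ => hposa k
    have hfact : (0:ℝ) < (n ! : ℝ) := by positivity
    have hr1 : (0:ℝ) < (n:ℝ) ^ (n0:ℝ) := Real.rpow_pos_of_pos hnR _
    have hr2 : (0:ℝ) < (n:ℝ) ^ ((n0:ℝ) + a) := Real.rpow_pos_of_pos hnR _
    have hrpow : (n:ℝ) ^ (-a) = (n:ℝ) ^ (n0:ℝ) / (n:ℝ) ^ ((n0:ℝ) + a) := by
      rw [← Real.rpow_sub hnR]; ring_nf
    rw [Real.GammaSeq, Real.GammaSeq, hprod, hrpow]
    field_simp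
  -- shift from range (n+1) to range (n - n0)
  rw [← tendsto_add_atTop_iff_nat (n0 + 1)]
  have hratio : Tendsto (fun n : ℕ => (((n : ℝ) + n0 + 1) / n) ^ (-a)) atTop (𝓝 1) := by
    have hb : Tendsto (fun n : ℕ => ((n : ℝ) + n0 + 1) / n) atTop (𝓝 1) := by
      have h0 : Tendsto (fun n : ℕ => ((n0 : ℝ) + 1) / n) atTop (𝓝 0) :=
        tendsto_const_div_atTop_nhds_zero_nat _
      have := h0.const_add 1
      rw [add_zero] at this
      refine this.congr' ?_
      filter_upwards [eventually_ge_atTop 1] with n hn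
      have hnR : (0:ℝ) < n := by exact_mod_cast hn
      field_simp
      ring
    have hc : ContinuousAt (fun x : ℝ => x ^ (-a)) 1 :=
      Real.continuousAt_rpow_const 1 (-a) (Or.inl one_ne_zero)
    have := hc.tendsto.comp hb
    rwa [Real.one_rpow] at this
  have := hratio.mul key
  rw [one_mul] at this
  refine this.congr' ?_
  filter_upwards [eventually_ge_atTop 1] with n hn
  have hnR : (0:ℝ) < n := by exact_mod_cast hn
  have hcast : ((n + (n0 + 1) : ℕ) : ℝ) = (n : ℝ) + n0 + 1 := by push_cast; ring
  have hsub : n + (n0 + 1) - n0 = n + 1 := by omega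
  have hnum : (0:ℝ) ≤ (n : ℝ) + n0 + 1 := by positivity
  have hden : (0:ℝ) < (n:ℝ) ^ (-a) := Real.rpow_pos_of_pos hnR _
  simp only [hsub, hcast]
  rw [Real.div_rpow hnum hnR.le]
  field_simp

/-- There is a nonnegative, integrable random variable `X_∞`, measurable w.r.t. the σ-algebra
generated by `⋃_{n ≥ n0} ℱ_n`, with `E[X_∞] ≤ x0 · Γ(n0)/Γ(n0+a)`, such that
`n^{-a} · X_n → X_∞` almost surely. -/
theorem stmt_5 {Ω : Type*} {m0 : MeasurableSpace Ω} (μ : Measure Ω) [IsProbabilityMeasure μ]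
    (n0 : ℕ) (hn0 : 1 ≤ n0) (a : ℝ) (ha : -(n0 : ℝ) < a)
    (ℱ : Filtration ℕ m0) (X : ℕ → Ω → ℝ)
    (hnn : ∀ n, n0 ≤ n → ∀ᵐ ω ∂μ, 0 ≤ X n ω)
    (hint : ∀ n, n0 ≤ n → Integrable (X n) μ)
    (hadp : ∀ n, n0 ≤ n → StronglyMeasurable[ℱ n] (X n))
    (hrec : ∀ n, n0 ≤ n → μ[X (n + 1) | ℱ n] =ᵐ[μ] fun ω => (1 + a / n) * X n ω)
    (hx0 : 0 < ∫ ω, X n0 ω ∂μ) :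
    ∃ Xinf : Ω → ℝ,
      StronglyMeasurable[⨆ n, ℱ (n0 + n)] Xinf ∧
      Integrable Xinf μ ∧
      (∀ᵐ ω ∂μ, 0 ≤ Xinf ω) ∧
      (∫ ω, Xinf ω ∂μ)
        ≤ (∫ ω, X n0 ω ∂μ) * Real.Gamma (n0 : ℝ) / Real.Gamma ((n0 : ℝ) + a) ∧
      ∀ᵐ ω ∂μ, Tendsto (fun n : ℕ => (n : ℝ) ^ (-a) * X n ω) atTop (nhds (Xinf ω)) := by
  have hn0R : (0:ℝ) < n0 := by exact_mod_cast hn0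
  set x0 := ∫ ω, X n0 ω ∂μ with hx0def
  set p : ℕ → ℝ := fun n => ∏ k ∈ Finset.range n, (1 + a / ((n0 : ℝ) + k)) with hpdef
  have hfacpos : ∀ k : ℕ, (0:ℝ) < 1 + a / ((n0 : ℝ) + k) := by
    intro k
    have h1 : (0:ℝ) < (n0 : ℝ) + k := by positivity
    have hk : (0:ℝ) ≤ (k : ℝ) := Nat.cast_nonneg k
    have h2 : (0:ℝ) < (n0 : ℝ) + k + a := by linarith
    have : (1:ℝ) + a / ((n0:ℝ) + k) = ((n0:ℝ) + k + a) / ((n0:ℝ) + k) := by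
      field_simp
    rw [this]
    positivity
  have hppos : ∀ n, 0 < p n := fun n => Finset.prod_pos fun k _ => hfacpos k
  -- the filtration G n = ℱ (n0 + n)
  set G : Filtration ℕ m0 :=
    { seq := fun n => ℱ (n0 + n)
      mono' := fun i j h => ℱ.mono (by omega)
      le' := fun n => ℱ.le _ } with hGdef
  -- the martingale
  set Y : ℕ → Ω → ℝ := fun n ω => (p n)⁻¹ * X (n0 + n) ω with hYdef
  have hYadp : StronglyAdapted G Y := fun n =>
    ((hadp (n0 + n) (Nat.le_add_right _ _)).const_mul _)
  have hYint : ∀ n, Integrable (Y n) μ := fun n =>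
    (hint (n0 + n) (Nat.le_add_right _ _)).const_mul _
  have hYmart : Martingale Y G μ := by
    refine martingale_nat hYadp hYint fun n => ?_
    have hsmul : Y (n + 1) = (p (n + 1))⁻¹ • X (n0 + (n + 1)) := by
      funext ω; simp [hYdef, smul_eq_mul]
    have h1 : μ[Y (n + 1) | G n] =ᵐ[μ] (p (n + 1))⁻¹ • μ[X (n0 + (n + 1)) | G n] := by
      rw [hsmul]; exact condExp_smul (p (n + 1))⁻¹ (X (n0 + (n + 1))) _
    have h2 : μ[X (n0 + (n + 1)) | ℱ (n0 + n)]
        =ᵐ[μ] fun ω => (1 + a / ((n0 : ℝ) + n)) * X (n0 + n) ω := by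
      have := hrec (n0 + n) (Nat.le_add_right _ _)
      have hc : ((n0 + n : ℕ) : ℝ) = (n0 : ℝ) + n := by push_cast; ring
      rw [hc] at this
      exact this
    have h2' : μ[X (n0 + (n + 1)) | G n]
        =ᵐ[μ] fun ω => (1 + a / ((n0 : ℝ) + n)) * X (n0 + n) ω := h2
    refine EventuallyEq.symm ?_
    filter_upwards [h1, h2'] with ω hω1 hω2
    rw [hω1]
    simp only [Pi.smul_apply, smul_eq_mul]
    rw [hω2]
    have hp1 : p (n + 1) = p n * (1 + a / ((n0 : ℝ) + n)) := by
      simp [hpdef, Finset.prod_range_succ]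
    have hf := (hfacpos n).ne'
    simp only [hYdef, hp1]
    rw [mul_inv, mul_assoc, inv_mul_cancel_left₀ hf]
  -- constant expectation
  have hEY : ∀ n, ∫ ω, Y n ω ∂μ = x0 := by
    intro n
    have h0 : ∫ ω, Y 0 ω ∂μ = x0 := by
      simp [hYdef, hpdef, integral_const_mul, hx0def]
    have h1 := hYmart.2 0 n (Nat.zero_le n)
    calc ∫ ω, Y n ω ∂μ = ∫ ω, (μ[Y n | G 0]) ω ∂μ := (integral_condExp (G.le 0)).symm
      _ = ∫ ω, Y 0 ω ∂μ := integral_congr_ae h1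
      _ = x0 := h0
  have hYnn : ∀ n, ∀ᵐ ω ∂μ, 0 ≤ Y n ω := by
    intro n
    filter_upwards [hnn (n0 + n) (Nat.le_add_right _ _)] with ω h
    exact mul_nonneg (inv_nonneg.2 (hppos n).le) h
  -- uniform L¹ bound
  have hbdd : ∀ n, eLpNorm (Y n) 1 μ ≤ (x0.toNNReal : ℝ≥0∞) := by
    intro n
    rw [eLpNorm_one_eq_lintegral_enorm,
      ← ofReal_integral_norm_eq_lintegral_enorm (hYint n)]
    have h : ∫ ω, ‖Y n ω‖ ∂μ = x0 := by
      rw [← hEY n]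
      refine integral_congr_ae ?_
      filter_upwards [hYnn n] with ω h using Real.norm_of_nonneg h
    rw [h]
    exact le_of_eq rfl
  set Ylim := G.limitProcess Y μ with hYlimdef
  have htend : ∀ᵐ ω ∂μ, Tendsto (fun n => Y n ω) atTop (𝓝 (Ylim ω)) :=
    hYmart.submartingale.ae_tendsto_limitProcess hbdd
  have hYlimmeas : StronglyMeasurable[⨆ n, ℱ (n0 + n)] Ylim :=
    Filtration.stronglyMeasurable_limitProcess
  have hYlimint : Integrable Ylim μ :=
    memLp_one_iff_integrable.mp (hYmart.submartingale.memLp_limitProcess hbdd)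
  have hYlimnn : ∀ᵐ ω ∂μ, 0 ≤ Ylim ω := by
    filter_upwards [htend, ae_all_iff.2 hYnn] with ω h1 h2
    exact ge_of_tendsto' h1 fun n => h2 n
  -- Fatou
  have hfatou : ∫ ω, Ylim ω ∂μ ≤ x0 := by
    have hYm : ∀ n, Measurable fun ω => ENNReal.ofReal (Y n ω) := fun n =>
      ((hYmart.stronglyMeasurable n).mono (G.le n)).measurable.ennreal_ofReal
    have h3 : ∀ n, ∫⁻ ω, ENNReal.ofReal (Y n ω) ∂μ = ENNReal.ofReal x0 := fun n => by
      rw [← ofReal_integral_eq_lintegral_ofReal (hYint n) (hYnn n), hEY n]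
    have h1 : ∫⁻ ω, ENNReal.ofReal (Ylim ω) ∂μ ≤ ENNReal.ofReal x0 := by
      have h2 : ∫⁻ ω, ENNReal.ofReal (Ylim ω) ∂μ
          = ∫⁻ ω, liminf (fun n => ENNReal.ofReal (Y n ω)) atTop ∂μ := by
        refine lintegral_congr_ae ?_
        filter_upwards [htend] with ω h
        rw [(ENNReal.tendsto_ofReal h).liminf_eq]
      rw [h2]
      refine le_trans (lintegral_liminf_le hYm) ?_
      simp only [h3, liminf_const]
      exact le_rfl
    have h4 : ∫ ω, Ylim ω ∂μ = (∫⁻ ω, ENNReal.ofReal (Ylim ω) ∂μ).toReal :=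
      integral_eq_lintegral_of_nonneg_ae hYlimnn
        (hYlimmeas.mono (iSup_le fun n => ℱ.le (n0 + n))).aestronglyMeasurable
    rw [h4]
    calc (∫⁻ ω, ENNReal.ofReal (Ylim ω) ∂μ).toReal
        ≤ (ENNReal.ofReal x0).toReal := ENNReal.toReal_mono ENNReal.ofReal_ne_top h1
      _ = x0 := ENNReal.toReal_ofReal hx0.le
  set c0 := Real.Gamma (n0 : ℝ) / Real.Gamma ((n0 : ℝ) + a) with hc0def
  have hc0 : 0 ≤ c0 := by
    have h1 := Real.Gamma_pos_of_pos hn0R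
    have h2 := Real.Gamma_pos_of_pos (show (0:ℝ) < (n0:ℝ) + a by linarith)
    positivity
  refine ⟨fun ω => c0 * Ylim ω, hYlimmeas.const_mul _, hYlimint.const_mul _, ?_, ?_, ?_⟩
  · filter_upwards [hYlimnn] with ω h using mul_nonneg hc0 h
  · rw [integral_const_mul, mul_div_assoc]
    exact le_trans (mul_le_mul_of_nonneg_left hfatou hc0) (le_of_eq (mul_comm c0 x0))
  · have hlim := stmt5_aux n0 hn0 a ha
    filter_upwards [htend] with ω hω
    have h2 : Tendsto (fun n : ℕ => Y (n - n0) ω) atTop (𝓝 (Ylim ω)) :=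
      hω.comp (tendsto_sub_atTop_nat n0)
    have h3 := hlim.mul h2
    refine h3.congr' ?_
    filter_upwards [eventually_ge_atTop n0] with n hn
    have hadd : n0 + (n - n0) = n := by omega
    have hpn := (hppos (n - n0)).ne'
    simp only [hYdef, hadd]
    rw [mul_assoc, mul_inv_cancel_left₀ hpn]
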